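/- Let 𝕋 be a combinatorial tree forcing. Then the uniformity of the tree ideal equals the continuum: non(t⁰) = 𝔠, where non(t⁰) is the least cardinality of a subset of ω^ω not belonging to t⁰. -/

import Mathlib

/-- The restriction `x↾n` of a sequence `x ∈ ω^ω` to its first `n` values, as a finite sequence. -/
def seqRestrict (x : ℕ → ℕ) (n : ℕ) : List ℕ := List.ofFn fun i : Fin n => x i

/-- A tree on `ω`: a nonempty set of finite sequences closed under initial segments. -/
def IsSeqTree (T : Set (List ℕ)) : Prop :=
  T.Nonempty ∧ ∀ s ∈ T, ∀ t : List ℕ, t <+: s → t ∈ T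

/-- `[T]`, the set of branches of a tree `T ⊆ ω^{<ω}`. -/
def branches (T : Set (List ℕ)) : Set (ℕ → ℕ) := {x | ∀ n : ℕ, seqRestrict x n ∈ T}

/-- `S` and `T` are compatible in `𝕋` (ordered by inclusion) if they have a common extension. -/
def Compat (𝕋 : Set (Set (List ℕ))) (S T : Set (List ℕ)) : Prop :=
  ∃ R ∈ 𝕋, R ⊆ S ∧ R ⊆ T

/-- A combinatorial tree forcing: a collection `𝕋` of trees on `ω` containing the full tree,
closed under restrictions `T_s`, with large disjoint antichains, and homogeneous. -/
structure CombTreeForcing (𝕋 : Set (Set (List ℕ))) : Prop where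
  /-- every member of `𝕋` is a tree -/
  isTree : ∀ T ∈ 𝕋, IsSeqTree T
  /-- (1) `ω^{<ω} ∈ 𝕋` -/
  univ_mem : (Set.univ : Set (List ℕ)) ∈ 𝕋
  /-- (2) closure under subtrees `T_s` -/
  restrict_mem : ∀ T ∈ 𝕋, ∀ s ∈ T, {t ∈ T | s <+: t ∨ t <+: s} ∈ 𝕋
  /-- (3) large disjoint antichains: a continuous `f : ω^ω → 2^ω` all of whose fibers are
  branch sets of trees in `𝕋` -/
  large_disjoint : ∃ f : (ℕ → ℕ) → (ℕ → Bool), Continuous f ∧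
      ∀ x : ℕ → Bool, ∃ T ∈ 𝕋, f ⁻¹' {x} = branches T
  /-- (4) homogeneity: below every `T ∈ 𝕋` there is an order-preserving injective copy
  `i : ω^{<ω} → T` of the full tree inducing a homeomorphism `g : ω^ω → [T]`,
  `g(x) = ⋃_n i(x↾n)`, such that `S ∈ 𝕋` iff the downward closure of `i''S` is in `𝕋`. -/
  homogeneity : ∀ T ∈ 𝕋, ∃ i : List ℕ → List ℕ,
      Function.Injective i ∧ (∀ s t : List ℕ, s <+: t → i s <+: i t) ∧
      (∀ s : List ℕ, i s ∈ T) ∧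
      ∃ g : (ℕ → ℕ) → (ℕ → ℕ),
        (∀ (x : ℕ → ℕ) (n : ℕ),
          i (seqRestrict x n) = seqRestrict (g x) (i (seqRestrict x n)).length) ∧
        Topology.IsEmbedding g ∧ Set.range g = branches T ∧
        ∀ S : Set (List ℕ), IsSeqTree S → (S ∈ 𝕋 ↔ {t | ∃ s ∈ S, t <+: i s} ∈ 𝕋)

/-- The tree ideal `t⁰` associated with `𝕋`: all `X ⊆ ω^ω` such that below every `T ∈ 𝕋`
there is `S ∈ 𝕋` with `X ∩ [S] = ∅`. -/
def treeIdeal (𝕋 : Set (Set (List ℕ))) : Set (Set (ℕ → ℕ)) :=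
  {X | ∀ T ∈ 𝕋, ∃ S ∈ 𝕋, S ⊆ T ∧ X ∩ branches S = ∅}

/-- The cofinality `cof(I)` of an ideal `I`: the least cardinality of a family `J ⊆ I`
such that every member of `I` is contained in a member of `J`. -/
noncomputable def idealCof (I : Set (Set (ℕ → ℕ))) : Cardinal :=
  sInf {c : Cardinal | ∃ J ⊆ I, Cardinal.mk J = c ∧ ∀ X ∈ I, ∃ Y ∈ J, X ⊆ Y}

/-- The uniformity `non(I)` of an ideal `I`: the least cardinality of a set of reals
not belonging to `I`. -/
noncomputable def idealNon (I : Set (Set (ℕ → ℕ))) : Cardinal :=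
  sInf {c : Cardinal | ∃ X : Set (ℕ → ℕ), Cardinal.mk X = c ∧ X ∉ I}

lemma seqRestrict_length (x : ℕ → ℕ) (n : ℕ) : (seqRestrict x n).length = n :=
  List.length_ofFn

lemma seqRestrict_getElem (x : ℕ → ℕ) {n j : ℕ} (h : j < (seqRestrict x n).length) :
    (seqRestrict x n)[j] = x j := by
  simp [seqRestrict]

lemma prefix_apply {y u : ℕ → ℕ} {m L : ℕ}
    (h : seqRestrict y m <+: seqRestrict u L) {j : ℕ} (hj : j < m) : y j = u j := by
  have hj' : j < (seqRestrict y m).length := by rwa [seqRestrict_length]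
  have := h.getElem hj'
  rwa [seqRestrict_getElem, seqRestrict_getElem] at this

lemma mk_nat_arrow : Cardinal.mk (ℕ → ℕ) = Cardinal.continuum := by
  rw [← Cardinal.power_def, Cardinal.mk_nat, Cardinal.power_self_eq le_rfl,
    Cardinal.two_power_aleph0]

lemma mk_cantor : Cardinal.mk (ℕ → Bool) = Cardinal.continuum := by
  rw [← Cardinal.power_def, Cardinal.mk_nat, Cardinal.mk_bool, Cardinal.two_power_aleph0]

lemma small_mem_treeIdeal (𝕋 : Set (Set (List ℕ))) (hctf : CombTreeForcing 𝕋)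
    (X : Set (ℕ → ℕ)) (hX : Cardinal.mk X < Cardinal.continuum) : X ∈ treeIdeal 𝕋 := by
  intro T hT
  obtain ⟨i, hi_inj, hi_mono, hi_mem, g, hgi, hg_emb, hg_range, hiff⟩ := hctf.homogeneity T hT
  obtain ⟨f, hf_cont, hfib⟩ := hctf.large_disjoint
  have hY : Cardinal.mk (f '' (g ⁻¹' X)) < Cardinal.continuum :=
    lt_of_le_of_lt (Cardinal.mk_image_le.trans
      (Cardinal.mk_preimage_of_injective g X hg_emb.injective)) hX
  obtain ⟨x, hx⟩ : ∃ x, x ∉ f '' (g ⁻¹' X) := by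
    by_contra h
    push_neg at h
    have : f '' (g ⁻¹' X) = Set.univ := Set.eq_univ_of_forall h
    rw [this, Cardinal.mk_univ, mk_cantor] at hY
    exact lt_irrefl _ hY
  obtain ⟨Tx, hTxmem, hTxfib⟩ := hfib x
  refine ⟨{t | ∃ s ∈ Tx, t <+: i s}, (hiff Tx (hctf.isTree Tx hTxmem)).mp hTxmem, ?_, ?_⟩
  · rintro t ⟨s, _, hpre⟩
    exact (hctf.isTree T hT).2 (i s) (hi_mem s) t hpre
  · rw [Set.eq_empty_iff_forall_notMem]
    rintro y ⟨hyX, hyB⟩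
    -- y is a branch of T, hence in the range of g
    have hyT : y ∈ branches T := by
      intro n
      obtain ⟨s, _, hpre⟩ := hyB n
      exact (hctf.isTree T hT).2 (i s) (hi_mem s) _ hpre
    obtain ⟨z, hz⟩ : y ∈ Set.range g := hg_range ▸ hyT
    choose s hsTx hspre using hyB
    -- w m extends s m by zeros
    set w : ℕ → ℕ → ℕ := fun m j => if h : j < (s m).length then (s m)[j] else 0 with hw
    have hws : ∀ m, seqRestrict (w m) (s m).length = s m := by
      intro m
      apply List.ext_getElem
      · rw [seqRestrict_length]
      · intro j h1 h2
        rw [seqRestrict_getElem]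
        simp only [hw]
        rw [dif_pos h2]
    have hagree : ∀ m, ∀ j < m, y j = g (w m) j := by
      intro m j hj
      have h1 : i (s m) = seqRestrict (g (w m)) (i (s m)).length := by
        have := hgi (w m) (s m).length
        rwa [hws m] at this
      have h2 : seqRestrict y m <+: seqRestrict (g (w m)) (i (s m)).length := by
        rw [← h1]; exact hspre m
      exact prefix_apply h2 hj
    have htend : Filter.Tendsto (fun m => g (w m)) Filter.atTop (nhds y) := by
      rw [tendsto_pi_nhds]
      intro j
      refine tendsto_const_nhds.congr' ?_
      filter_upwards [Filter.eventually_gt_atTop j] with m hm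
      exact hagree m j hm
    have hwz : Filter.Tendsto w Filter.atTop (nhds z) := by
      rw [hg_emb.tendsto_nhds_iff, hz]
      exact htend
    have hzTx : z ∈ branches Tx := by
      intro k
      have hv : ∀ᶠ m in Filter.atTop, ∀ j ∈ Finset.range k, w m j = z j := by
        rw [Filter.eventually_all_finset]
        intro j _
        have := tendsto_pi_nhds.mp hwz j
        exact this ((isOpen_discrete {z j}).mem_nhds rfl)
      set B := Finset.sup (Finset.range (k + 1)) (fun j => (i (seqRestrict z j)).length) with hB
      obtain ⟨m, hm1, hm2⟩ := (hv.and (Filter.eventually_gt_atTop B)).exists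
      have hilen : m ≤ (i (s m)).length := by
        have := (hspre m).length_le
        rwa [seqRestrict_length] at this
      by_cases hlen : k ≤ (s m).length
      · have hpre : seqRestrict z k <+: s m := by
          rw [List.prefix_iff_eq_take]
          apply List.ext_getElem
          · rw [seqRestrict_length, List.length_take]
            omega
          · intro j h1 h2
            rw [seqRestrict_getElem, List.getElem_take]
            have hjk : j < k := by rwa [seqRestrict_length] at h1
            have := hm1 j (Finset.mem_range.mpr hjk)
            simp only [hw] at this
            rw [dif_pos (lt_of_lt_of_le hjk hlen)] at this
            omega
        exact (hctf.isTree Tx hTxmem).2 (s m) (hsTx m) _ hpre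
      · exfalso
        push_neg at hlen
        have hsm : s m = seqRestrict z (s m).length := by
          apply List.ext_getElem
          · rw [seqRestrict_length]
          · intro j h1 h2
            rw [seqRestrict_getElem]
            have := hm1 j (Finset.mem_range.mpr (lt_trans h1 hlen))
            simp only [hw] at this
            rw [dif_pos h1] at this
            omega
        have hle : (i (seqRestrict z (s m).length)).length ≤ B := by
          rw [hB]
          exact Finset.le_sup (f := fun j => (i (seqRestrict z j)).length)
            (Finset.mem_range.mpr (by omega))
        rw [hsm] at hilen
        omega
    have hfz : f z = x := by
      have : z ∈ f ⁻¹' {x} := by rw [hTxfib]; exact hzTx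
      exact this
    exact hx ⟨z, by rw [Set.mem_preimage, hz]; exact hyX, hfz⟩


/-- For any combinatorial tree forcing `𝕋`, the uniformity of the tree ideal equals the
continuum: `non(t⁰) = 𝔠`. -/
theorem non_treeIdeal_eq_continuum (𝕋 : Set (Set (List ℕ))) (hctf : CombTreeForcing 𝕋) :
    idealNon (treeIdeal 𝕋) = Cardinal.continuum := by
  have hmem : Cardinal.continuum ∈
      {c : Cardinal | ∃ X : Set (ℕ → ℕ), Cardinal.mk X = c ∧ X ∉ treeIdeal 𝕋} := by
    refine ⟨Set.univ, by rw [Cardinal.mk_univ, mk_nat_arrow], ?_⟩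
    intro h
    obtain ⟨S, hS, -, hempty⟩ := h Set.univ hctf.univ_mem
    obtain ⟨i, -, -, -, g, -, -, hg_range, -⟩ := hctf.homogeneity S hS
    have : g (fun _ => 0) ∈ branches S := hg_range ▸ Set.mem_range_self _
    have : g (fun _ => 0) ∈ Set.univ ∩ branches S := ⟨trivial, this⟩
    rw [hempty] at this
    exact this
  refine le_antisymm (csInf_le' hmem) (le_csInf ⟨_, hmem⟩ ?_)
  rintro c ⟨X, hXc, hXnot⟩
  by_contra h
  push_neg at h
  rw [← hXc] at h
  exact hXnot (small_mem_treeIdeal 𝕋 hctf X h)
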